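/- Let X be a pseudocompact space with a quasi κ-metric ρ bounded by 1, and let βX be its Čech–Stone compactification. For each open W ⊆ βX, let f_W : X → ℝ be f_W(x) = ρ(x, cl_X(W ∩ X)) and let f̃_W : βX → ℝ be its continuous extension; define d(y, cl W) = f̃_W(y). Then d satisfies condition K4*: for every increasing sequence {cl W_n} of regularly closed subsets of βX with W = ⋃_n W_n, d(y, cl W) = inf_n d(y, cl W_n) for all y ∈ βX. -/

import Mathlib

/-- A set is regularly closed if it equals the closure of its interior. -/
def RegClosed {X : Type*} [TopologicalSpace X] (C : Set X) : Prop :=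
  C = closure (interior C)

/-- A set is regularly open if it equals the interior of its closure. -/
def RegOpen {X : Type*} [TopologicalSpace X] (U : Set X) : Prop :=
  U = interior (closure U)

/-- A quasi κ-metric on `X`: a nonnegative function of a point and a regularly
closed set satisfying axioms K1*, K2, K3 and K4. -/
structure IsQuasiKappaMetric {X : Type*} [TopologicalSpace X] (ρ : X → Set X → ℝ) : Prop where
  nonneg : ∀ x C, RegClosed C → 0 ≤ ρ x C
  k1star : ∀ C : Set X, RegClosed C → ∃ V : Set X, IsOpen V ∧ V ⊆ Cᶜ ∧
    Cᶜ ⊆ closure V ∧ ∀ x, 0 < ρ x C ↔ x ∈ V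
  k2 : ∀ x (C C' : Set X), RegClosed C → RegClosed C' → C ⊆ C' → ρ x C' ≤ ρ x C
  k3 : ∀ C : Set X, RegClosed C → Continuous (fun x => ρ x C)
  k4 : ∀ S : Set (Set X), S.Nonempty → (∀ C ∈ S, RegClosed C) → IsChain (· ⊆ ·) S →
    ∀ x, ρ x (closure (⋃₀ S)) = sInf {r : ℝ | ∃ C ∈ S, r = ρ x C}

/-- A space is pseudocompact if every continuous real-valued function on it is bounded. -/
def Pseudocompact (X : Type*) [TopologicalSpace X] : Prop :=
  ∀ f : X → ℝ, Continuous f → ∃ M : ℝ, ∀ x, |f x| ≤ M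

lemma regClosed_closure_of_isOpen {X : Type*} [TopologicalSpace X] {U : Set X}
    (hU : IsOpen U) : RegClosed (closure U) := by
  apply subset_antisymm
  · exact closure_mono (interior_maximal subset_closure hU)
  · exact (closure_mono interior_subset).trans (by rw [closure_closure])

lemma closure_iUnion_closure_eq {X : Type*} [TopologicalSpace X] (A : ℕ → Set X) :
    closure (⋃ n, closure (A n)) = closure (⋃ n, A n) := by
  apply subset_antisymm
  · exact closure_minimal
      (Set.iUnion_subset fun n => closure_mono (Set.subset_iUnion A n)) isClosed_closure
  · exact closure_mono (Set.iUnion_mono fun n => subset_closure)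

lemma le_of_denseRange_stoneCech {X : Type*} [TopologicalSpace X]
    {f g : StoneCech X → ℝ} (hf : Continuous f) (hg : Continuous g)
    (h : ∀ x : X, f (stoneCechUnit x) ≤ g (stoneCechUnit x)) (z : StoneCech X) :
    f z ≤ g z := by
  have hcl : closure (Set.range (stoneCechUnit : X → StoneCech X)) ⊆ {z | f z ≤ g z} :=
    closure_minimal (by rintro _ ⟨x, rfl⟩; exact h x) (isClosed_le hf hg)
  exact hcl (by rw [(denseRange_stoneCechUnit (α := X)).closure_eq]; trivial)

theorem stmt10 {X : Type*} [TopologicalSpace X]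
    (hpc : Pseudocompact X)
    (ρ : X → Set X → ℝ) (hρ : IsQuasiKappaMetric ρ)
    (hnormed : ∀ x C, RegClosed C → ρ x C ≤ 1)
    (d : StoneCech X → Set (StoneCech X) → ℝ)
    (hd_cont : ∀ W : Set (StoneCech X), IsOpen W →
      Continuous (fun y => d y (closure W)))
    (hd_ext : ∀ W : Set (StoneCech X), IsOpen W → ∀ x : X,
      d (stoneCechUnit x) (closure W) = ρ x (closure (stoneCechUnit ⁻¹' W))) :
    ∀ W : ℕ → Set (StoneCech X), (∀ n, IsOpen (W n)) →
      Monotone (fun n => closure (W n)) →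
      ∀ y : StoneCech X, d y (closure (⋃ n, W n)) = ⨅ n, d y (closure (W n)) := by
  intro W hWopen hmono y
  classical
  -- replace W by an increasing family with the same closures
  set V : ℕ → Set (StoneCech X) := fun n => ⋃ k ∈ Finset.range (n + 1), W k with hVdef
  have hVopen : ∀ n, IsOpen (V n) := fun n => isOpen_biUnion fun k _ => hWopen k
  have hVmono : Monotone V := by
    intro a b hab
    exact Set.biUnion_subset_biUnion_left (fun k hk => Finset.mem_range.2
      (lt_of_lt_of_le (Finset.mem_range.1 hk) (by omega)))
  have hVW : ∀ n, closure (V n) = closure (W n) := by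
    intro n
    apply subset_antisymm
    · apply closure_minimal _ isClosed_closure
      apply Set.iUnion₂_subset
      intro k hk
      exact subset_closure.trans (hmono (Nat.lt_succ_iff.1 (Finset.mem_range.1 hk)))
    · exact closure_mono (Set.subset_biUnion_of_mem (Finset.self_mem_range_succ n))
  have hUnionEq : (⋃ n, V n) = ⋃ n, W n := by
    apply subset_antisymm
    · exact Set.iUnion_subset fun n => Set.iUnion₂_subset fun k _ => Set.subset_iUnion W k
    · exact Set.iUnion_mono fun n =>
        Set.subset_biUnion_of_mem (Finset.self_mem_range_succ n)
  rw [← hUnionEq]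
  simp only [← hVW]
  -- notation
  set f : StoneCech X → ℝ := fun z => d z (closure (⋃ n, V n)) with hfdef
  set φ : ℕ → StoneCech X → ℝ := fun n z => d z (closure (V n)) with hφdef
  show f y = ⨅ n, φ n y
  have hUopen : IsOpen (⋃ n, V n) := isOpen_iUnion hVopen
  have hfc : Continuous f := hd_cont _ hUopen
  have hφc : ∀ n, Continuous (φ n) := fun n => hd_cont _ (hVopen n)
  set C : ℕ → Set X := fun n => closure (stoneCechUnit ⁻¹' V n) with hCdef
  have hCreg : ∀ n, RegClosed (C n) := fun n =>
    regClosed_closure_of_isOpen ((hVopen n).preimage continuous_stoneCechUnit)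
  have hCmono : Monotone C := fun a b hab =>
    closure_mono (Set.preimage_mono (hVmono hab))
  have hDreg : RegClosed (closure (stoneCechUnit ⁻¹' ⋃ n, V n)) :=
    regClosed_closure_of_isOpen (hUopen.preimage continuous_stoneCechUnit)
  have hext : ∀ n (x : X), φ n (stoneCechUnit x) = ρ x (C n) := fun n x =>
    hd_ext _ (hVopen n) x
  have hextf : ∀ x : X, f (stoneCechUnit x) = ρ x (closure (stoneCechUnit ⁻¹' ⋃ n, V n)) :=
    fun x => hd_ext _ hUopen x
  -- bounds
  have hφ0 : ∀ n z, 0 ≤ φ n z := by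
    intro n
    apply le_of_denseRange_stoneCech continuous_const (hφc n)
    intro x
    rw [hext n x]
    exact hρ.nonneg x _ (hCreg n)
  have hφ1 : ∀ n z, φ n z ≤ 1 := by
    intro n
    apply le_of_denseRange_stoneCech (hφc n) continuous_const
    intro x
    rw [hext n x]
    exact hnormed x _ (hCreg n)
  have hbdd : ∀ z, BddBelow (Set.range fun n => φ n z) := by
    intro z
    exact ⟨0, by rintro r ⟨n, rfl⟩; exact hφ0 n z⟩
  -- key identity on the dense copy of X
  have hkey : ∀ x : X, f (stoneCechUnit x) = ⨅ n, φ n (stoneCechUnit x) := by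
    intro x
    have hchain : IsChain (· ⊆ ·) (Set.range C) := by
      rintro _ ⟨a, rfl⟩ _ ⟨b, rfl⟩ _
      rcases le_total a b with h | h
      · exact Or.inl (hCmono h)
      · exact Or.inr (hCmono h)
    have h4 := hρ.k4 (Set.range C) ⟨C 0, ⟨0, rfl⟩⟩
      (by rintro _ ⟨n, rfl⟩; exact hCreg n) hchain x
    have hset : closure (⋃₀ Set.range C) = closure (stoneCechUnit ⁻¹' ⋃ n, V n) := by
      rw [Set.sUnion_range, hCdef]
      rw [closure_iUnion_closure_eq, ← Set.preimage_iUnion]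
    have hIset : {r : ℝ | ∃ c ∈ Set.range C, r = ρ x c} =
        Set.range fun n => ρ x (C n) := by
      ext r
      constructor
      · rintro ⟨c, ⟨n, rfl⟩, rfl⟩; exact ⟨n, rfl⟩
      · rintro ⟨n, rfl⟩; exact ⟨C n, ⟨n, rfl⟩, rfl⟩
    rw [hextf x, ← hset, h4, hIset, sInf_range]
    exact iInf_congr fun n => (hext n x).symm
  -- f ≤ every φ n
  have hle : ∀ n z, f z ≤ φ n z := by
    intro n
    apply le_of_denseRange_stoneCech hfc (hφc n)
    intro x
    rw [hextf x, hext n x]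
    exact hρ.k2 x _ _ (hCreg n) hDreg
      (closure_mono (Set.preimage_mono (Set.subset_iUnion V n)))
  refine le_antisymm (le_ciInf fun n => hle n y) ?_
  by_contra hcon
  push_neg at hcon
  set c : ℝ := ⨅ n, φ n y with hcdef
  have hcφy : ∀ n, c ≤ φ n y := fun n => ciInf_le (hbdd y) n
  have hc1 : c ≤ 1 := le_trans (hcφy 0) (hφ1 0 y)
  -- auxiliary nonnegative continuous function vanishing exactly where needed
  set t : ℕ → StoneCech X → ℝ := fun n z => (1 / 2 : ℝ) ^ n * max (c - φ n z) 0 with htdef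
  have htnonneg : ∀ n z, 0 ≤ t n z := fun n z =>
    mul_nonneg (by positivity) (le_max_right _ _)
  have htbound : ∀ n z, ‖t n z‖ ≤ (1 / 2 : ℝ) ^ n := by
    intro n z
    rw [Real.norm_eq_abs, abs_of_nonneg (htnonneg n z)]
    have h1 : max (c - φ n z) 0 ≤ 1 := max_le (by linarith [hφ0 n z]) zero_le_one
    calc t n z ≤ (1 / 2 : ℝ) ^ n * 1 := mul_le_mul_of_nonneg_left h1 (by positivity)
      _ = (1 / 2 : ℝ) ^ n := mul_one _
  have htsummable : ∀ z, Summable fun n => t n z := fun z =>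
    Summable.of_norm_bounded summable_geometric_two fun n => htbound n z
  set h : StoneCech X → ℝ := fun z => max (f z - f y) 0 + ∑' n, t n z with hhdef
  have hhc : Continuous h := by
    apply Continuous.add
    · exact (hfc.sub continuous_const).max continuous_const
    · exact continuous_tsum
        (fun n => continuous_const.mul ((continuous_const.sub (hφc n)).max continuous_const))
        summable_geometric_two (fun n z => htbound n z)
  have hhy : h y = 0 := by
    have h2 : ∀ n, t n y = 0 := by
      intro n
      have : c - φ n y ≤ 0 := by linarith [hcφy n]
      simp [htdef, max_eq_right this]
    have : (∑' n, t n y) = 0 := by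
      rw [tsum_congr h2, tsum_zero]
    simp [hhdef, this]
  have hhpos : ∀ x : X, 0 < h (stoneCechUnit x) := by
    intro x
    have hnn1 : (0 : ℝ) ≤ max (f (stoneCechUnit x) - f y) 0 := le_max_right _ _
    have hnn2 : (0 : ℝ) ≤ ∑' n, t n (stoneCechUnit x) :=
      tsum_nonneg fun n => htnonneg n _
    rcases (add_nonneg hnn1 hnn2).lt_or_eq with hlt | heq
    · exact hlt
    exfalso
    have ha : max (f (stoneCechUnit x) - f y) 0 = 0 := by linarith
    have hb : (∑' n, t n (stoneCechUnit x)) = 0 := by linarith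
    have hfx : f (stoneCechUnit x) ≤ f y := by
      have := le_max_left (f (stoneCechUnit x) - f y) (0 : ℝ)
      rw [ha] at this; linarith
    have hφx : ∀ n, c ≤ φ n (stoneCechUnit x) := by
      intro n
      have hterm : t n (stoneCechUnit x) = 0 := by
        refine le_antisymm ?_ (htnonneg n _)
        rw [← hb]
        exact Summable.le_tsum (htsummable _) n fun i _ => htnonneg i _
      have hmax : max (c - φ n (stoneCechUnit x)) 0 = 0 := by
        have hne : ((1 : ℝ) / 2) ^ n ≠ 0 := by positivity
        have := hterm
        rw [htdef] at this
        exact (mul_eq_zero.1 this).resolve_left hne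
      have := le_max_left (c - φ n (stoneCechUnit x)) (0 : ℝ)
      rw [hmax] at this; linarith
    have : c ≤ f (stoneCechUnit x) := by
      rw [hkey x]
      exact le_ciInf hφx
    linarith [hcon]
  -- pseudocompactness gives a uniform positive lower bound on the dense copy
  obtain ⟨M, hM⟩ := hpc (fun x => (h (stoneCechUnit x))⁻¹)
    ((hhc.comp continuous_stoneCechUnit).inv₀ fun x => (hhpos x).ne')
  have hXne : Nonempty X := by
    by_contra hX
    rw [not_nonempty_iff] at hX
    have hrange : Set.range (stoneCechUnit : X → StoneCech X) = ∅ :=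
      Set.range_eq_empty _
    have := (denseRange_stoneCechUnit (α := X)).closure_eq
    rw [hrange, closure_empty] at this
    exact (Set.eq_empty_iff_forall_notMem.1 this.symm) y trivial
  obtain ⟨x0⟩ := hXne
  have hMpos : 0 < M :=
    lt_of_lt_of_le (inv_pos.2 (hhpos x0)) (le_trans (le_abs_self _) (hM x0))
  have hlow : ∀ x : X, M⁻¹ ≤ h (stoneCechUnit x) := by
    intro x
    have h1 : (h (stoneCechUnit x))⁻¹ ≤ M := le_trans (le_abs_self _) (hM x)
    calc M⁻¹ ≤ ((h (stoneCechUnit x))⁻¹)⁻¹ :=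
          inv_anti₀ (inv_pos.2 (hhpos x)) h1
      _ = h (stoneCechUnit x) := inv_inv _
  have hfin : M⁻¹ ≤ h y :=
    le_of_denseRange_stoneCech continuous_const hhc hlow y
  rw [hhy] at hfin
  have : (0 : ℝ) < M⁻¹ := inv_pos.2 hMpos
  linarith
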